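/- Let x = (x_i)_{i∈[n]} be a Nash equilibrium of an n-player m-action game and let ε, α ∈ (0,1). If k > 8(ln m + ln n − ln α − ln ε + ln 8)/ε², then the product empirical distribution of play ∏_{i∈[n]} s_i^k, formed from k i.i.d. samples from x, is an ε-Nash equilibrium with probability greater than 1 − α. -/

import Mathlib

open Finset

open scoped Classical

noncomputable section

/-- `x` is a probability distribution on the finite type `A`. -/
def IsDist {A : Type*} [Fintype A] (x : A → ℝ) : Prop :=
  (∀ a, 0 ≤ x a) ∧ ∑ a, x a = 1

/-- Probability of the pure action profile `a` under the product distribution `x`. -/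
def prodProb {n m : ℕ} (x : Fin n → Fin m → ℝ) (a : Fin n → Fin m) : ℝ :=
  ∏ i, x i (a i)

/-- Expected utility of the payoff function `u` under the product distribution `x`. -/
def EU {n m : ℕ} (u : (Fin n → Fin m) → ℝ) (x : Fin n → Fin m → ℝ) : ℝ :=
  ∑ a, prodProb x a * u a

/-- The point mass (pure strategy) at action `b`. -/
def pureStrat {m : ℕ} (b : Fin m) : Fin m → ℝ := fun c => if c = b then 1 else 0

/-- `x` is an `ε`-Nash equilibrium of the game `u`: no player gains more than `ε`
by deviating to any pure action. -/
def IsNash {n m : ℕ} (u : Fin n → (Fin n → Fin m) → ℝ) (x : Fin n → Fin m → ℝ)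
    (ε : ℝ) : Prop :=
  ∀ (i : Fin n) (b : Fin m),
    EU (u i) x ≥ EU (u i) (Function.update x i (pureStrat b)) - ε

/-- Empirical distribution of player `i` given `k` sampled action profiles. -/
def emp {n m : ℕ} (k : ℕ) (a : Fin k → Fin n → Fin m) (i : Fin n) : Fin m → ℝ :=
  fun b => ((univ.filter fun t => a t i = b).card : ℝ) / k

/-- Probability of the event `E` over `k` i.i.d. samples from the product distribution `x`. -/
def PrProd {n m : ℕ} (k : ℕ) (x : Fin n → Fin m → ℝ)
    (E : (Fin k → Fin n → Fin m) → Prop) : ℝ :=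
  ∑ a : Fin k → Fin n → Fin m, if E a then ∏ t, prodProb x (a t) else 0

section Aux
variable {n m : ℕ}

lemma prodProb_nonneg {x : Fin n → Fin m → ℝ} (hx : ∀ i c, 0 ≤ x i c)
    (p : Fin n → Fin m) : 0 ≤ prodProb x p :=
  Finset.prod_nonneg fun i _ => hx i (p i)

lemma sum_prodProb {x : Fin n → Fin m → ℝ} (hx : ∀ i, ∑ c, x i c = 1) :
    ∑ p : Fin n → Fin m, prodProb x p = 1 := by
  unfold prodProb
  rw [← Fintype.prod_sum]
  simp [hx]

lemma emp_nonneg (k : ℕ) (a : Fin k → Fin n → Fin m) (i : Fin n) (b : Fin m) :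
    0 ≤ emp k a i b :=
  div_nonneg (Nat.cast_nonneg _) (Nat.cast_nonneg _)

lemma emp_sum {k : ℕ} (hk : 0 < k) (a : Fin k → Fin n → Fin m) (i : Fin n) :
    ∑ b, emp k a i b = 1 := by
  unfold emp
  rw [← Finset.sum_div, ← Nat.cast_sum,
    ← Finset.card_eq_sum_card_fiberwise (fun t _ => Finset.mem_univ (a t i))]
  simp [Finset.card_univ]
  omega

lemma jensen_exp {ι : Type*} [Fintype ι] (w z : ι → ℝ) (h0 : ∀ i, 0 ≤ w i)
    (h1 : ∑ i, w i = 1) :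
    Real.exp (∑ i, w i * z i) ≤ ∑ i, w i * Real.exp (z i) := by
  have := convexOn_exp.map_sum_le (t := univ) (w := w) (p := z)
    (fun i _ => h0 i) h1 (fun i _ => Set.mem_univ _)
  simpa [smul_eq_mul] using this

end Aux

section MoreAux
variable {n m k : ℕ}
/-- One-sample mgf bound for a `[0,1]`-valued function, via symmetrization. -/
lemma one_sample_mgf {ι : Type*} [Fintype ι] (w h : ι → ℝ) (h0 : ∀ p, 0 ≤ w p)
    (h1 : ∑ p, w p = 1) (hh : ∀ p, 0 ≤ h p ∧ h p ≤ 1) (s : ℝ) :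
    ∑ p, w p * Real.exp (s * (h p - ∑ q, w q * h q)) ≤ Real.exp (s ^ 2 / 2) := by
  set μ := ∑ q, w q * h q with hμ
  have key : ∀ p, Real.exp (s * (h p - μ)) ≤ ∑ q, w q * Real.exp (s * (h p - h q)) := by
    intro p
    have e1 : s * (h p - μ) = ∑ q, w q * (s * (h p - h q)) := by
      have : ∑ q, w q * (s * (h p - h q)) = (∑ q, w q) * (s * h p) - s * ∑ q, w q * h q := by
        rw [Finset.sum_mul, Finset.mul_sum, ← Finset.sum_sub_distrib]
        exact Finset.sum_congr rfl fun q _ => by ring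
      rw [this, h1, ← hμ]; ring
    rw [e1]
    exact jensen_exp w _ h0 h1
  have step1 : ∑ p, w p * Real.exp (s * (h p - μ)) ≤
      ∑ p, ∑ q, w p * w q * Real.exp (s * (h p - h q)) := by
    apply Finset.sum_le_sum
    intro p _
    calc w p * Real.exp (s * (h p - μ)) ≤
        w p * ∑ q, w q * Real.exp (s * (h p - h q)) :=
          mul_le_mul_of_nonneg_left (key p) (h0 p)
      _ = ∑ q, w p * w q * Real.exp (s * (h p - h q)) := by
          rw [Finset.mul_sum]; exact Finset.sum_congr rfl fun q _ => by ring
  set S := ∑ p, ∑ q, w p * w q * Real.exp (s * (h p - h q)) with hS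
  have hswap : S = ∑ p, ∑ q, w p * w q * Real.exp (-(s * (h p - h q))) := by
    rw [hS, Finset.sum_comm]
    refine Finset.sum_congr rfl fun p _ => Finset.sum_congr rfl fun q _ => ?_
    have : -(s * (h p - h q)) = s * (h q - h p) := by ring
    rw [this, mul_comm (w q) (w p)]
  have h2S : 2 * S = ∑ p, ∑ q, w p * w q *
      (Real.exp (s * (h p - h q)) + Real.exp (-(s * (h p - h q)))) := by
    rw [two_mul]
    nth_rewrite 2 [hswap]
    rw [hS, ← Finset.sum_add_distrib]
    refine Finset.sum_congr rfl fun p _ => ?_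
    rw [← Finset.sum_add_distrib]
    exact Finset.sum_congr rfl fun q _ => by ring
  have hbound : 2 * S ≤ 2 * Real.exp (s ^ 2 / 2) := by
    rw [h2S]
    have : ∑ p, ∑ q, w p * w q * (2 * Real.exp (s ^ 2 / 2)) =
        2 * Real.exp (s ^ 2 / 2) := by
      simp only [← Finset.sum_mul]
      rw [← Finset.sum_mul_sum]
      rw [h1]; ring
    rw [← this]
    refine Finset.sum_le_sum fun p _ => Finset.sum_le_sum fun q _ => ?_
    have hcosh : Real.exp (s * (h p - h q)) + Real.exp (-(s * (h p - h q))) =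
        2 * Real.cosh (s * (h p - h q)) := by
      rw [Real.cosh_eq]; ring
    have hle : Real.cosh (s * (h p - h q)) ≤ Real.exp (s ^ 2 / 2) := by
      calc Real.cosh (s * (h p - h q)) ≤ Real.exp ((s * (h p - h q)) ^ 2 / 2) :=
            Real.cosh_le_exp_half_sq _
        _ ≤ Real.exp (s ^ 2 / 2) := by
            apply Real.exp_le_exp.2
            have hd : (h p - h q) ^ 2 ≤ 1 := by
              have h1p := hh p; have h1q := hh q
              nlinarith [h1p.1, h1p.2, h1q.1, h1q.2]
            nlinarith [sq_nonneg s]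
    have := mul_nonneg (h0 p) (h0 q)
    rw [hcosh]
    nlinarith
  calc ∑ p, w p * Real.exp (s * (h p - μ)) ≤ S := step1
    _ ≤ Real.exp (s ^ 2 / 2) := by linarith

lemma EU_update_pure (u : (Fin n → Fin m) → ℝ) (s : Fin n → Fin m → ℝ) (i : Fin n)
    (b : Fin m) (hs : ∑ c, s i c = 1) :
    EU u (Function.update s i (pureStrat b)) = EU (fun a => u (Function.update a i b)) s := by
  unfold EU prodProb
  -- abbreviation for the erased product together with utility
  set H : (Fin n → Fin m) → ℝ := fun a' => (∏ j ∈ univ.erase i, s j (a' j)) * u a' with hH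
  have lhs_eq : ∑ a : Fin n → Fin m, (∏ j, Function.update s i (pureStrat b) j (a j)) * u a
      = ∑ a : Fin n → Fin m, if a i = b then H a else 0 := by
    refine Finset.sum_congr rfl fun a _ => ?_
    rw [← Finset.mul_prod_erase univ _ (Finset.mem_univ i)]
    have h1 : Function.update s i (pureStrat b) i (a i) = if a i = b then 1 else 0 := by
      rw [Function.update_self]; rfl
    have h2 : ∏ j ∈ univ.erase i, Function.update s i (pureStrat b) j (a j)
        = ∏ j ∈ univ.erase i, s j (a j) := by
      refine Finset.prod_congr rfl fun j hj => ?_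
      rw [Function.update_of_ne (Finset.ne_of_mem_erase hj)]
    rw [h1, h2, hH]
    by_cases hab : a i = b <;> simp [hab]
  have rhs_eq : ∑ a : Fin n → Fin m, (∏ j, s j (a j)) * u (Function.update a i b)
      = ∑ a : Fin n → Fin m, if a i = b then H a else 0 := by
    -- rewrite each summand through the update
    have step1 : ∀ a : Fin n → Fin m, (∏ j, s j (a j)) * u (Function.update a i b)
        = s i (a i) * H (Function.update a i b) := by
      intro a
      rw [← Finset.mul_prod_erase univ _ (Finset.mem_univ i), hH]
      have h2 : ∏ j ∈ univ.erase i, s j (a j)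
          = ∏ j ∈ univ.erase i, s j (Function.update a i b j) := by
        refine Finset.prod_congr rfl fun j hj => ?_
        rw [Function.update_of_ne (Finset.ne_of_mem_erase hj)]
      rw [h2]; ring
    simp_rw [step1]
    -- group by the fiber of `fun a => Function.update a i b`
    rw [← Finset.sum_fiberwise_of_maps_to (g := fun a : Fin n → Fin m => Function.update a i b)
      (fun a _ => Finset.mem_univ _) (fun a => s i (a i) * H (Function.update a i b))]
    refine Finset.sum_congr rfl fun a' _ => ?_
    by_cases ha' : a' i = b
    · have hfib : ∀ a ∈ univ.filter (fun a : Fin n → Fin m => Function.update a i b = a'),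
          s i (a i) * H (Function.update a i b) = s i (a i) * H a' := by
        intro a ha
        rw [(Finset.mem_filter.1 ha).2]
      rw [Finset.sum_congr rfl hfib, if_pos ha']
      have : ∑ a ∈ univ.filter (fun a : Fin n → Fin m => Function.update a i b = a'),
          s i (a i) = ∑ c : Fin m, s i c := by
        refine Finset.sum_bij' (fun a _ => a i) (fun c _ => Function.update a' i c) ?_ ?_ ?_ ?_ ?_
        · intro a ha; exact Finset.mem_univ _
        · intro c _
          refine Finset.mem_filter.2 ⟨Finset.mem_univ _, ?_⟩
          rw [Function.update_idem, ← ha', Function.update_eq_self]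
        · intro a ha
          have h := (Finset.mem_filter.1 ha).2
          show Function.update a' i (a i) = a
          funext j
          by_cases hj : j = i
          · subst hj
            rw [Function.update_self]
          · have := congrFun h j
            rw [Function.update_of_ne hj] at this ⊢
            rw [this]
        · intro c _
          show Function.update a' i c i = c
          rw [Function.update_self]
        · intro a ha; rfl
      rw [← Finset.sum_mul, this, hs, one_mul]
    · rw [if_neg ha']
      have : univ.filter (fun a : Fin n → Fin m => Function.update a i b = a') = ∅ := by
        refine Finset.filter_eq_empty_iff.2 fun a _ => ?_
        intro hcon
        apply ha'
        rw [← hcon, Function.update_self]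
      rw [this, Finset.sum_empty]
  rw [lhs_eq, rhs_eq]

lemma sum_choices (hk : 0 < k) (h : (Fin n → Fin m) → ℝ) (a : Fin k → Fin n → Fin m) :
    ∑ r : Fin n → Fin k, h (fun j => a (r j) j) = (k : ℝ) ^ n * EU h (emp k a) := by
  have hk' : (k : ℝ) ≠ 0 := by positivity
  rw [EU, Finset.mul_sum]
  rw [← Finset.sum_fiberwise_of_maps_to
    (g := fun r : Fin n → Fin k => fun j => a (r j) j)
    (fun r _ => Finset.mem_univ _) (fun r => h (fun j => a (r j) j))]
  refine Finset.sum_congr rfl fun c _ => ?_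
  have hfib : univ.filter (fun r : Fin n → Fin k => (fun j => a (r j) j) = c)
      = Fintype.piFinset (fun j => univ.filter fun t => a t j = c j) := by
    ext r
    simp [Fintype.mem_piFinset, funext_iff]
  have hcongr : ∀ r ∈ univ.filter (fun r : Fin n → Fin k => (fun j => a (r j) j) = c),
      h (fun j => a (r j) j) = h c := fun r hr => by rw [(Finset.mem_filter.1 hr).2]
  rw [Finset.sum_congr rfl hcongr, Finset.sum_const, hfib, Fintype.card_piFinset,
    nsmul_eq_mul, Nat.cast_prod]
  have hpp : (k : ℝ) ^ n * prodProb (emp k a) c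
      = ∏ j, ((univ.filter fun t => a t j = c j).card : ℝ) := by
    unfold prodProb emp
    calc (k : ℝ) ^ n * ∏ j, ((univ.filter fun t => a t j = c j).card : ℝ) / k
        = ∏ j : Fin n, ((k : ℝ) * (((univ.filter fun t => a t j = c j).card : ℝ) / k)) := by
          rw [Finset.prod_mul_distrib, Finset.prod_const, Finset.card_univ, Fintype.card_fin]
      _ = ∏ j, ((univ.filter fun t => a t j = c j).card : ℝ) := by
          refine Finset.prod_congr rfl fun j _ => ?_
          field_simp
  rw [← mul_assoc, hpp]

lemma card_perm_fix (t c : Fin k) :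
    (univ.filter fun σ : Equiv.Perm (Fin k) => σ t = c).card * k = Nat.factorial k := by
  have htot : ∑ c' : Fin k, (univ.filter fun σ : Equiv.Perm (Fin k) => σ t = c').card
      = Nat.factorial k := by
    rw [← Finset.card_eq_sum_card_fiberwise (fun σ _ => Finset.mem_univ (σ t))]
    simp [Finset.card_univ, Fintype.card_perm, Fintype.card_fin]
  have heq : ∀ c' : Fin k, (univ.filter fun σ : Equiv.Perm (Fin k) => σ t = c').card
      = (univ.filter fun σ : Equiv.Perm (Fin k) => σ t = c).card := by
    intro c'
    apply Finset.card_bij (fun σ _ => Equiv.swap c' c * σ)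
    · intro σ hσ
      refine Finset.mem_filter.2 ⟨Finset.mem_univ _, ?_⟩
      have : σ t = c' := (Finset.mem_filter.1 hσ).2
      simp [Equiv.Perm.mul_apply, this]
    · intro σ₁ h₁ σ₂ h₂ hss
      exact mul_left_cancel hss
    · intro τ hτ
      refine ⟨Equiv.swap c' c * τ, Finset.mem_filter.2 ⟨Finset.mem_univ _, ?_⟩, ?_⟩
      · have : τ t = c := (Finset.mem_filter.1 hτ).2
        simp [Equiv.Perm.mul_apply, this]
      · rw [← mul_assoc, Equiv.swap_mul_self, one_mul]
  have : ∑ c' : Fin k, (univ.filter fun σ : Equiv.Perm (Fin k) => σ t = c').card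
      = k * (univ.filter fun σ : Equiv.Perm (Fin k) => σ t = c).card := by
    rw [Finset.sum_congr rfl fun c' _ => heq c']
    simp [Finset.card_univ, mul_comm]
  rw [htot] at this; rw [this, Nat.mul_comm]

lemma sum_perms (hk : 0 < k) (t : Fin k) (F : (Fin n → Fin k) → ℝ) :
    ∑ π : Fin n → Equiv.Perm (Fin k), F (fun j => π j t)
      = ((Nat.factorial k : ℝ) / k) ^ n * ∑ r : Fin n → Fin k, F r := by
  have hk' : (k : ℝ) ≠ 0 := by positivity
  rw [← Finset.sum_fiberwise_of_maps_to
    (g := fun π : Fin n → Equiv.Perm (Fin k) => fun j => π j t)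
    (fun π _ => Finset.mem_univ _) (fun π => F (fun j => π j t)), Finset.mul_sum]
  refine Finset.sum_congr rfl fun r _ => ?_
  have hcongr : ∀ π ∈ univ.filter
      (fun π : Fin n → Equiv.Perm (Fin k) => (fun j => π j t) = r),
      F (fun j => π j t) = F r := fun π hπ => by rw [(Finset.mem_filter.1 hπ).2]
  rw [Finset.sum_congr rfl hcongr, Finset.sum_const, nsmul_eq_mul]
  have hfib : univ.filter (fun π : Fin n → Equiv.Perm (Fin k) => (fun j => π j t) = r)
      = Fintype.piFinset (fun j => univ.filter fun σ : Equiv.Perm (Fin k) => σ t = r j) := by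
    ext π
    simp [Fintype.mem_piFinset, funext_iff]
  rw [hfib, Fintype.card_piFinset, Nat.cast_prod]
  have : ∀ j : Fin n, ((univ.filter fun σ : Equiv.Perm (Fin k) => σ t = r j).card : ℝ)
      = (Nat.factorial k : ℝ) / k := by
    intro j
    have := card_perm_fix t (r j)
    have h2 : ((univ.filter fun σ : Equiv.Perm (Fin k) => σ t = r j).card : ℝ) * k
        = (Nat.factorial k : ℝ) := by exact_mod_cast congrArg (Nat.cast : ℕ → ℝ) this
    field_simp at h2 ⊢
    linarith
  rw [Finset.prod_congr rfl fun j _ => this j, Finset.prod_const, Finset.card_univ,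
    Fintype.card_fin]

end MoreAux

section Master
variable {n m k : ℕ}

/-- Apply one permutation of sample indices per player. -/
def permApply (π : Fin n → Equiv.Perm (Fin k)) (a : Fin k → Fin n → Fin m) :
    Fin k → Fin n → Fin m := fun t j => a (π j t) j

lemma permApply_bijective (π : Fin n → Equiv.Perm (Fin k)) :
    Function.Bijective (permApply (m := m) π) := by
  rw [Function.bijective_iff_has_inverse]
  refine ⟨permApply (fun j => (π j)⁻¹), fun a => ?_, fun a => ?_⟩ <;>
    · funext t j
      simp [permApply]

lemma permApply_weight (x : Fin n → Fin m → ℝ) (π : Fin n → Equiv.Perm (Fin k))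
    (a : Fin k → Fin n → Fin m) :
    ∏ t, prodProb x (permApply π a t) = ∏ t, prodProb x (a t) := by
  unfold prodProb permApply
  rw [Finset.prod_comm]
  nth_rewrite 2 [Finset.prod_comm]
  refine Finset.prod_congr rfl fun j _ => ?_
  exact Equiv.prod_comp (π j) (fun t => x j (a t j))

/-- Master moment-generating-function bound for the product empirical distribution. -/
lemma master_mgf (hk : 0 < k) (x : Fin n → Fin m → ℝ)
    (hx0 : ∀ i c, 0 ≤ x i c) (hx1 : ∀ i, ∑ c, x i c = 1)
    (h : (Fin n → Fin m) → ℝ) (hh : ∀ p, 0 ≤ h p ∧ h p ≤ 1) (lam : ℝ) :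
    ∑ a : Fin k → Fin n → Fin m, (∏ t, prodProb x (a t)) *
      Real.exp (lam * (EU h (emp k a) - EU h x)) ≤ Real.exp (lam ^ 2 / (2 * k)) := by
  have hk' : (k : ℝ) ≠ 0 := by positivity
  set μ := EU h x with hμ
  set W : (Fin k → Fin n → Fin m) → ℝ := fun a => ∏ t, prodProb x (a t) with hW
  have hWnn : ∀ a, 0 ≤ W a := fun a =>
    Finset.prod_nonneg fun t _ => prodProb_nonneg hx0 _
  set N : ℕ := (Nat.factorial k) ^ n with hN
  have hNpos : 0 < (N : ℝ) := by
    have := Nat.factorial_pos k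
    positivity
  have cardP : (Fintype.card (Fin n → Equiv.Perm (Fin k)) : ℝ) = (N : ℝ) := by
    rw [Fintype.card_fun, Fintype.card_perm, Fintype.card_fin, Fintype.card_fin, hN]
  set D : (Fin k → Fin n → Fin m) → (Fin n → Equiv.Perm (Fin k)) → ℝ :=
    fun a π => (1 / (k : ℝ)) * ∑ t, h (fun j => a (π j t) j) with hD
  -- key identity: the average of D over permutations is the empirical expected utility
  have keyId : ∀ a, ∑ π : Fin n → Equiv.Perm (Fin k), D a π = (N : ℝ) * EU h (emp k a) := by
    intro a
    rw [hD]
    simp only []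
    rw [← Finset.mul_sum, Finset.sum_comm]
    have hst : ∀ t : Fin k, ∑ π : Fin n → Equiv.Perm (Fin k), h (fun j => a (π j t) j)
        = ((Nat.factorial k : ℝ) / k) ^ n * ((k : ℝ) ^ n * EU h (emp k a)) := by
      intro t
      rw [sum_perms hk t (fun r => h (fun j => a (r j) j)), sum_choices hk h a]
    rw [Finset.sum_congr rfl fun t _ => hst t, Finset.sum_const, Finset.card_univ,
      Fintype.card_fin, nsmul_eq_mul]
    have : ((Nat.factorial k : ℝ) / k) ^ n * ((k : ℝ) ^ n * EU h (emp k a))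
        = (N : ℝ) * EU h (emp k a) := by
      rw [← mul_assoc, ← mul_pow, div_mul_cancel₀ _ hk', hN]
      push_cast
      ring
    rw [this]
    field_simp
  -- Jensen step over the permutations
  have jensen : ∀ a, Real.exp (lam * (EU h (emp k a) - μ)) ≤
      ∑ π : Fin n → Equiv.Perm (Fin k), (1 / (N : ℝ)) * Real.exp (lam * (D a π - μ)) := by
    intro a
    have hrw : lam * (EU h (emp k a) - μ) =
        ∑ π : Fin n → Equiv.Perm (Fin k), (1 / (N : ℝ)) * (lam * (D a π - μ)) := by
      have e : ∀ π : Fin n → Equiv.Perm (Fin k),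
          (1 / (N : ℝ)) * (lam * (D a π - μ)) = (lam / N) * (D a π) - lam * μ / N := by
        intro π; field_simp
      rw [Finset.sum_congr rfl fun π _ => e π, Finset.sum_sub_distrib, ← Finset.mul_sum,
        keyId a, Finset.sum_const, Finset.card_univ, nsmul_eq_mul]
      rw [show ((Fintype.card (Fin n → Equiv.Perm (Fin k)) : ℝ)) = (N : ℝ) from cardP]
      field_simp
    rw [hrw]
    exact jensen_exp _ _ (fun _ => by positivity) (by
      rw [Finset.sum_const, Finset.card_univ, nsmul_eq_mul, cardP]
      field_simp)
  -- invariance of the weighted sum under per-player permutations of samples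
  have invar : ∀ π : Fin n → Equiv.Perm (Fin k),
      ∑ a : Fin k → Fin n → Fin m, W a * Real.exp (lam * (D a π - μ))
      = ∑ a : Fin k → Fin n → Fin m, W a *
          Real.exp (lam * ((1 / (k : ℝ)) * (∑ t, h (a t)) - μ)) := by
    intro π
    refine Fintype.sum_bijective (permApply π) (permApply_bijective π) _ _ fun a => ?_
    have h1 : W (permApply π a) = W a := permApply_weight x π a
    have h2 : (1 / (k : ℝ)) * (∑ t, h (permApply π a t)) = D a π := rfl
    rw [h1, h2]
  -- factorization over the k independent samples
  have factor : ∑ a : Fin k → Fin n → Fin m, W a *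
      Real.exp (lam * ((1 / (k : ℝ)) * (∑ t, h (a t)) - μ))
      ≤ Real.exp (lam ^ 2 / (2 * k)) := by
    have hrw : ∀ a : Fin k → Fin n → Fin m,
        lam * ((1 / (k : ℝ)) * (∑ t, h (a t)) - μ) = ∑ t, (lam / k) * (h (a t) - μ) := by
      intro a
      rw [Finset.sum_congr rfl fun t (_ : t ∈ univ) => (by ring :
        (lam / k) * (h (a t) - μ) = (lam / k) * h (a t) - lam * μ / k)]
      rw [Finset.sum_sub_distrib, ← Finset.mul_sum, Finset.sum_const, Finset.card_univ,
        Fintype.card_fin, nsmul_eq_mul]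
      field_simp
    calc ∑ a : Fin k → Fin n → Fin m, W a *
          Real.exp (lam * ((1 / (k : ℝ)) * (∑ t, h (a t)) - μ))
        = ∑ a : Fin k → Fin n → Fin m,
          ∏ t, (prodProb x (a t) * Real.exp ((lam / k) * (h (a t) - μ))) := by
          refine Finset.sum_congr rfl fun a _ => ?_
          rw [hrw a, Real.exp_sum, hW, Finset.prod_mul_distrib]
      _ = ∏ t : Fin k, ∑ p : Fin n → Fin m,
            prodProb x p * Real.exp ((lam / k) * (h p - μ)) := by
          rw [Fintype.prod_sum (fun (t : Fin k) (p : Fin n → Fin m) =>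
            prodProb x p * Real.exp ((lam / k) * (h p - μ)))]
      _ ≤ ∏ t : Fin k, Real.exp ((lam / k) ^ 2 / 2) := by
          refine Finset.prod_le_prod (fun t _ => ?_) (fun t _ => ?_)
          · exact Finset.sum_nonneg fun p _ =>
              mul_nonneg (prodProb_nonneg hx0 p) (Real.exp_nonneg _)
          · have := one_sample_mgf (prodProb x) h (prodProb_nonneg hx0)
              (sum_prodProb hx1) hh (lam / k)
            simpa [hμ, EU] using this
      _ = Real.exp (lam ^ 2 / (2 * k)) := by
          rw [Finset.prod_const, Finset.card_univ, Fintype.card_fin, ← Real.exp_nat_mul]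
          congr 1
          field_simp
  -- assemble
  calc ∑ a : Fin k → Fin n → Fin m, W a * Real.exp (lam * (EU h (emp k a) - μ))
      ≤ ∑ a : Fin k → Fin n → Fin m, W a *
          (∑ π : Fin n → Equiv.Perm (Fin k), (1 / (N : ℝ)) * Real.exp (lam * (D a π - μ))) :=
        Finset.sum_le_sum fun a _ => mul_le_mul_of_nonneg_left (jensen a) (hWnn a)
    _ = ∑ π : Fin n → Equiv.Perm (Fin k), (1 / (N : ℝ)) *
          ∑ a : Fin k → Fin n → Fin m, W a * Real.exp (lam * (D a π - μ)) := by
        simp_rw [Finset.mul_sum]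
        rw [Finset.sum_comm]
        refine Finset.sum_congr rfl fun π _ => Finset.sum_congr rfl fun a _ => by ring
    _ = ∑ π : Fin n → Equiv.Perm (Fin k), (1 / (N : ℝ)) *
          ∑ a : Fin k → Fin n → Fin m, W a *
            Real.exp (lam * ((1 / (k : ℝ)) * (∑ t, h (a t)) - μ)) :=
        Finset.sum_congr rfl fun π _ => by rw [invar π]
    _ = ∑ a : Fin k → Fin n → Fin m, W a *
          Real.exp (lam * ((1 / (k : ℝ)) * (∑ t, h (a t)) - μ)) := by
        rw [Finset.sum_const, Finset.card_univ, nsmul_eq_mul, ← mul_assoc]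
        have hc : (Fintype.card (Fin n → Equiv.Perm (Fin k)) : ℝ) * (1 / (N : ℝ)) = 1 := by
          rw [cardP]; field_simp
        rw [hc, one_mul]
    _ ≤ Real.exp (lam ^ 2 / (2 * k)) := factor

end Master

section Tail
variable {n m k : ℕ}

lemma chernoff_aux (hk : 0 < k) (x : Fin n → Fin m → ℝ)
    (hx0 : ∀ i c, 0 ≤ x i c) (hx1 : ∀ i, ∑ c, x i c = 1)
    (h : (Fin n → Fin m) → ℝ) (hh : ∀ p, 0 ≤ h p ∧ h p ≤ 1) (lam θ : ℝ)
    (E : (Fin k → Fin n → Fin m) → Prop)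
    (hE : ∀ a, E a → θ ≤ lam * (EU h (emp k a) - EU h x)) :
    PrProd k x E ≤ Real.exp (lam ^ 2 / (2 * k) - θ) := by
  have hWnn : ∀ a : Fin k → Fin n → Fin m, 0 ≤ ∏ t, prodProb x (a t) :=
    fun a => Finset.prod_nonneg fun t _ => prodProb_nonneg hx0 _
  have step : PrProd k x E ≤ ∑ a : Fin k → Fin n → Fin m,
      (∏ t, prodProb x (a t)) * (Real.exp (lam * (EU h (emp k a) - EU h x)) *
        Real.exp (-θ)) := by
    unfold PrProd
    refine Finset.sum_le_sum fun a _ => ?_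
    by_cases hEa : E a
    · rw [if_pos hEa]
      have h1 : (1 : ℝ) ≤ Real.exp (lam * (EU h (emp k a) - EU h x)) * Real.exp (-θ) := by
        rw [← Real.exp_add, ← Real.exp_zero]
        refine Real.exp_le_exp.2 ?_
        have := hE a hEa
        linarith
      calc (∏ t, prodProb x (a t)) = (∏ t, prodProb x (a t)) * 1 := (mul_one _).symm
        _ ≤ _ := mul_le_mul_of_nonneg_left h1 (hWnn a)
    · rw [if_neg hEa]
      have := Real.exp_nonneg (lam * (EU h (emp k a) - EU h x))
      have := Real.exp_nonneg (-θ)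
      have := hWnn a
      positivity
  calc PrProd k x E ≤ _ := step
    _ = (∑ a : Fin k → Fin n → Fin m,
        (∏ t, prodProb x (a t)) * Real.exp (lam * (EU h (emp k a) - EU h x))) *
          Real.exp (-θ) := by
        rw [Finset.sum_mul]
        exact Finset.sum_congr rfl fun a _ => by ring
    _ ≤ Real.exp (lam ^ 2 / (2 * k)) * Real.exp (-θ) :=
        mul_le_mul_of_nonneg_right (master_mgf hk x hx0 hx1 h hh lam) (Real.exp_nonneg _)
    _ = Real.exp (lam ^ 2 / (2 * k) - θ) := by rw [← Real.exp_add]; ring_nf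

lemma tail_up (hk : 0 < k) (x : Fin n → Fin m → ℝ)
    (hx0 : ∀ i c, 0 ≤ x i c) (hx1 : ∀ i, ∑ c, x i c = 1)
    (h : (Fin n → Fin m) → ℝ) (hh : ∀ p, 0 ≤ h p ∧ h p ≤ 1) (δ : ℝ) (hδ : 0 ≤ δ) :
    PrProd k x (fun a => EU h x + δ ≤ EU h (emp k a)) ≤ Real.exp (-(k * δ ^ 2 / 2)) := by
  have hk' : (k : ℝ) ≠ 0 := by positivity
  have := chernoff_aux hk x hx0 hx1 h hh ((k : ℝ) * δ) ((k : ℝ) * δ ^ 2)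
    (fun a => EU h x + δ ≤ EU h (emp k a)) (fun a ha => by
      have h1 : δ ≤ EU h (emp k a) - EU h x := by linarith
      have h2 : (0 : ℝ) ≤ (k : ℝ) * δ := by positivity
      calc (k : ℝ) * δ ^ 2 = ((k : ℝ) * δ) * δ := by ring
        _ ≤ ((k : ℝ) * δ) * (EU h (emp k a) - EU h x) :=
            mul_le_mul_of_nonneg_left h1 h2)
  calc PrProd k x _ ≤ _ := this
    _ = Real.exp (-(k * δ ^ 2 / 2)) := by
      congr 1
      field_simp
      ring

lemma tail_lo (hk : 0 < k) (x : Fin n → Fin m → ℝ)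
    (hx0 : ∀ i c, 0 ≤ x i c) (hx1 : ∀ i, ∑ c, x i c = 1)
    (h : (Fin n → Fin m) → ℝ) (hh : ∀ p, 0 ≤ h p ∧ h p ≤ 1) (δ : ℝ) (hδ : 0 ≤ δ) :
    PrProd k x (fun a => EU h (emp k a) ≤ EU h x - δ) ≤ Real.exp (-(k * δ ^ 2 / 2)) := by
  have hk' : (k : ℝ) ≠ 0 := by positivity
  have := chernoff_aux hk x hx0 hx1 h hh (-((k : ℝ) * δ)) ((k : ℝ) * δ ^ 2)
    (fun a => EU h (emp k a) ≤ EU h x - δ) (fun a ha => by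
      have h1 : δ ≤ EU h x - EU h (emp k a) := by linarith
      have h2 : (0 : ℝ) ≤ (k : ℝ) * δ := by positivity
      calc (k : ℝ) * δ ^ 2 = ((k : ℝ) * δ) * δ := by ring
        _ ≤ ((k : ℝ) * δ) * (EU h x - EU h (emp k a)) :=
            mul_le_mul_of_nonneg_left h1 h2
        _ = -((k : ℝ) * δ) * (EU h (emp k a) - EU h x) := by ring)
  calc PrProd k x _ ≤ _ := this
    _ = Real.exp (-(k * δ ^ 2 / 2)) := by
      congr 1
      field_simp
      ring

lemma PrProd_union {ι : Type*} [Fintype ι] (x : Fin n → Fin m → ℝ)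
    (hx0 : ∀ i c, 0 ≤ x i c) (E : ι → (Fin k → Fin n → Fin m) → Prop) :
    PrProd k x (fun a => ∃ i, E i a) ≤ ∑ i, PrProd k x (E i) := by
  have hWnn : ∀ a : Fin k → Fin n → Fin m, 0 ≤ ∏ t, prodProb x (a t) :=
    fun a => Finset.prod_nonneg fun t _ => prodProb_nonneg hx0 _
  unfold PrProd
  rw [Finset.sum_comm]
  refine Finset.sum_le_sum fun a _ => ?_
  by_cases hEa : ∃ i, E i a
  · rw [if_pos hEa]
    obtain ⟨i0, hi0⟩ := hEa
    calc (∏ t, prodProb x (a t)) = if E i0 a then ∏ t, prodProb x (a t) else 0 := by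
          rw [if_pos hi0]
      _ ≤ ∑ i, if E i a then ∏ t, prodProb x (a t) else 0 := by
          refine Finset.single_le_sum
            (f := fun i => if E i a then ∏ t, prodProb x (a t) else 0)
            (fun i _ => ?_) (Finset.mem_univ i0)
          show (0:ℝ) ≤ if E i a then ∏ t, prodProb x (a t) else 0
          by_cases hi : E i a
          · rw [if_pos hi]; exact hWnn a
          · rw [if_neg hi]
  · rw [if_neg hEa]
    exact Finset.sum_nonneg fun i _ => by
      by_cases hi : E i a
      · rw [if_pos hi]; exact hWnn a
      · rw [if_neg hi]

lemma PrProd_total (x : Fin n → Fin m → ℝ) (hx1 : ∀ i, ∑ c, x i c = 1)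
    (E : (Fin k → Fin n → Fin m) → Prop) :
    PrProd k x E + PrProd k x (fun a => ¬ E a) = 1 := by
  unfold PrProd
  rw [← Finset.sum_add_distrib]
  have : ∀ a : Fin k → Fin n → Fin m,
      ((if E a then ∏ t, prodProb x (a t) else 0) +
       (if ¬ E a then ∏ t, prodProb x (a t) else 0)) = ∏ t, prodProb x (a t) := by
    intro a
    by_cases hEa : E a <;> simp [hEa]
  trans (∑ a : Fin k → Fin n → Fin m, ∏ t, prodProb x (a t))
  · refine Finset.sum_congr rfl fun a _ => ?_
    by_cases hEa : E a <;> simp [hEa]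
  · rw [← Fintype.prod_sum (fun (t : Fin k) (p : Fin n → Fin m) => prodProb x p)]
    simp [sum_prodProb hx1]

end Tail

lemma PrProd_mono {n m k : ℕ} (x : Fin n → Fin m → ℝ) (hx0 : ∀ i c, 0 ≤ x i c)
    (E F : (Fin k → Fin n → Fin m) → Prop) (hEF : ∀ a, E a → F a) :
    PrProd k x E ≤ PrProd k x F := by
  have hWnn : ∀ a : Fin k → Fin n → Fin m, 0 ≤ ∏ t, prodProb x (a t) :=
    fun a => Finset.prod_nonneg fun t _ => prodProb_nonneg hx0 _
  unfold PrProd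
  refine Finset.sum_le_sum fun a _ => ?_
  by_cases hEa : E a
  · rw [if_pos hEa, if_pos (hEF a hEa)]
  · rw [if_neg hEa]
    by_cases hFa : F a
    · rw [if_pos hFa]; exact hWnn a
    · rw [if_neg hFa]

/-- If `x` is a Nash equilibrium of an `n`-player `m`-action game,
`ε, α ∈ (0,1)`, and `k > 8(ln m + ln n − ln α − ln ε + ln 8)/ε²`, then the product
empirical distribution of `k` i.i.d. samples from `x` is an `ε`-Nash equilibrium
with probability greater than `1 − α`. -/
theorem stmt0 {n m : ℕ} (hn : 0 < n) (hm : 0 < m)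
    (u : Fin n → (Fin n → Fin m) → ℝ)
    (hu : ∀ i a, 0 ≤ u i a ∧ u i a ≤ 1)
    (x : Fin n → Fin m → ℝ) (hx : ∀ i, IsDist (x i))
    (hNash : IsNash u x 0)
    (ε α : ℝ) (hε : 0 < ε ∧ ε < 1) (hα : 0 < α ∧ α < 1)
    (k : ℕ)
    (hk : (k : ℝ) >
      8 * (Real.log m + Real.log n - Real.log α - Real.log ε + Real.log 8) / ε ^ 2) :
    PrProd k x (fun a => IsNash u (emp k a) ε) > 1 - α := by
  obtain ⟨hε0, hε1⟩ := hε
  obtain ⟨hα0, hα1⟩ := hα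
  have hx0 : ∀ i c, 0 ≤ x i c := fun i => (hx i).1
  have hx1 : ∀ i, ∑ c, x i c = 1 := fun i => (hx i).2
  have hm1 : (1 : ℝ) ≤ m := by exact_mod_cast hm
  have hn1 : (1 : ℝ) ≤ n := by exact_mod_cast hn
  have hmR : (0 : ℝ) < m := by linarith
  have hnR : (0 : ℝ) < n := by linarith
  have hlogm : 0 ≤ Real.log m := Real.log_nonneg hm1
  have hlogn : 0 ≤ Real.log n := Real.log_nonneg hn1
  have hlogα : Real.log α < 0 := Real.log_neg hα0 hα1
  have hlogε : Real.log ε < 0 := Real.log_neg hε0 hε1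
  have hlog8 : 0 < Real.log 8 := Real.log_pos (by norm_num)
  set L : ℝ := Real.log m + Real.log n - Real.log α - Real.log ε + Real.log 8 with hL
  have hLpos : 0 < L := by rw [hL]; linarith
  have hk0ℝ : (0 : ℝ) < k := lt_trans (by positivity) hk
  have hk0 : 0 < k := by exact_mod_cast hk0ℝ
  set δ : ℝ := ε / 2 with hδdef
  have hδ : 0 ≤ δ := by positivity
  -- the exponential bound
  have hkL : L < (k : ℝ) * ε ^ 2 / 8 := by
    have h1 : 8 * L / ε ^ 2 < (k : ℝ) := hk
    have h2 : 8 * L < (k : ℝ) * ε ^ 2 := by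
      have hε2 : (0 : ℝ) < ε ^ 2 := by positivity
      exact (div_lt_iff₀ hε2).1 h1
    linarith
  have hB : Real.exp (-((k : ℝ) * δ ^ 2 / 2)) < α * ε / (8 * m * n) := by
    have e1 : -((k : ℝ) * δ ^ 2 / 2) = -((k : ℝ) * ε ^ 2 / 8) := by
      rw [hδdef]; ring
    have e2 : Real.exp (-((k : ℝ) * ε ^ 2 / 8)) < Real.exp (-L) :=
      Real.exp_lt_exp.2 (by linarith)
    have e3 : Real.exp (-L) = α * ε / (8 * m * n) := by
      rw [hL, show -(Real.log m + Real.log n - Real.log α - Real.log ε + Real.log 8)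
        = (Real.log α + Real.log ε) - ((Real.log m + Real.log n) + Real.log 8) by ring,
        Real.exp_sub, Real.exp_add, Real.exp_add, Real.exp_add,
        Real.exp_log hα0, Real.exp_log hε0, Real.exp_log hmR, Real.exp_log hnR,
        Real.exp_log (by norm_num : (0:ℝ) < 8)]
      ring
    rw [e1]
    rw [e3] at e2
    exact e2
  -- the bad events
  set Ebad : (Fin n ⊕ Fin n × Fin m) → (Fin k → Fin n → Fin m) → Prop :=
    Sum.elim
      (fun i => fun a => EU (u i) (emp k a) ≤ EU (u i) x - δ)
      (fun p => fun a =>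
        EU (fun c => u p.1 (Function.update c p.1 p.2)) x + δ ≤
        EU (fun c => u p.1 (Function.update c p.1 p.2)) (emp k a)) with hEbad
  -- if no bad event happens, the empirical distribution is an ε-Nash equilibrium
  have hcover : ∀ a, ¬ IsNash u (emp k a) ε → ∃ j, Ebad j a := by
    intro a hno
    by_contra hnone
    push_neg at hnone
    apply hno
    intro i b
    have h1 : ¬ (EU (u i) (emp k a) ≤ EU (u i) x - δ) := hnone (Sum.inl i)
    have h2 : ¬ (EU (fun c => u i (Function.update c i b)) x + δ ≤
        EU (fun c => u i (Function.update c i b)) (emp k a)) := hnone (Sum.inr (i, b))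
    push_neg at h1 h2
    have hnash := hNash i b
    have id1 : EU (u i) (Function.update x i (pureStrat b))
        = EU (fun c => u i (Function.update c i b)) x :=
      EU_update_pure (u i) x i b (hx1 i)
    have id2 : EU (u i) (Function.update (emp k a) i (pureStrat b))
        = EU (fun c => u i (Function.update c i b)) (emp k a) :=
      EU_update_pure (u i) (emp k a) i b (emp_sum hk0 a i)
    rw [ge_iff_le] at hnash ⊢
    rw [id1] at hnash
    rw [id2]
    linarith
  -- probability bound for each bad event
  have hbound : ∀ j, PrProd k x (Ebad j) ≤ Real.exp (-((k : ℝ) * δ ^ 2 / 2)) := by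
    intro j
    cases j with
    | inl i =>
        exact tail_lo hk0 x hx0 hx1 (u i) (hu i) δ hδ
    | inr p =>
        exact tail_up hk0 x hx0 hx1 (fun c => u p.1 (Function.update c p.1 p.2))
          (fun c => hu p.1 _) δ hδ
  -- union bound
  have hbad : PrProd k x (fun a => ¬ IsNash u (emp k a) ε)
      ≤ ((n : ℝ) + n * m) * Real.exp (-((k : ℝ) * δ ^ 2 / 2)) := by
    calc PrProd k x (fun a => ¬ IsNash u (emp k a) ε)
        ≤ PrProd k x (fun a => ∃ j, Ebad j a) :=
          PrProd_mono x hx0 _ _ hcover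
      _ ≤ ∑ j : Fin n ⊕ Fin n × Fin m, PrProd k x (Ebad j) :=
          PrProd_union x hx0 Ebad
      _ ≤ ∑ _j : Fin n ⊕ Fin n × Fin m, Real.exp (-((k : ℝ) * δ ^ 2 / 2)) :=
          Finset.sum_le_sum fun j _ => hbound j
      _ = ((n : ℝ) + n * m) * Real.exp (-((k : ℝ) * δ ^ 2 / 2)) := by
          rw [Finset.sum_const, Finset.card_univ, nsmul_eq_mul]
          congr 1
          simp [Fintype.card_sum, Fintype.card_prod]
  -- numeric conclusion
  have hBpos : 0 < Real.exp (-((k : ℝ) * δ ^ 2 / 2)) := Real.exp_pos _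
  have hfinal : ((n : ℝ) + n * m) * Real.exp (-((k : ℝ) * δ ^ 2 / 2)) < α := by
    have h2 : ((n : ℝ) + n * m) ≤ 2 * (m * n) := by nlinarith
    have h3 : ((n : ℝ) + n * m) * Real.exp (-((k : ℝ) * δ ^ 2 / 2))
        ≤ 2 * (m * n) * Real.exp (-((k : ℝ) * δ ^ 2 / 2)) :=
      mul_le_mul_of_nonneg_right h2 (le_of_lt hBpos)
    have h4 : 2 * ((m : ℝ) * n) * Real.exp (-((k : ℝ) * δ ^ 2 / 2))
        < 2 * (m * n) * (α * ε / (8 * m * n)) := by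
      apply mul_lt_mul_of_pos_left hB
      positivity
    have h5 : 2 * ((m : ℝ) * n) * (α * ε / (8 * m * n)) = α * ε / 4 := by
      field_simp
      ring
    have h6 : α * ε / 4 < α := by nlinarith
    linarith
  have htot := PrProd_total x hx1 (fun a => IsNash u (emp k a) ε)
  have : PrProd k x (fun a => ¬ IsNash u (emp k a) ε) < α := lt_of_le_of_lt hbad hfinal
  linarith
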